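/- Let f satisfy the (α, β)-regularity condition in a ζ-neighborhood of the set of local minima X*. Then gradient descent with step size η = 1/β started in the neighborhood satisfies dist(x_{t+1}, X*)² ≤ (1 - α/β)·dist(x_t, X*)², so iterates stay in the neighborhood and converge linearly. -/

import Mathlib

/-- If `f` satisfies the `(α, β)`-regularity condition in a `ζ`-neighborhood
of the set of local minima `X*`, then gradient descent with step size `1/β`
started in the neighborhood stays in the neighborhood and satisfies
`dist(x_{t+1}, X*)² ≤ (1 - α/β)·dist(x_t, X*)²`. -/
theorem regularity_linear_convergence {d : ℕ}
    (f : EuclideanSpace ℝ (Fin d) → ℝ) (α β ζ : ℝ)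
    (hα : 0 < α) (hβ : 0 < β) (hαβ : α ≤ β) (hζ : 0 < ζ)
    (Xstar : Set (EuclideanSpace ℝ (Fin d)))
    (P : EuclideanSpace ℝ (Fin d) → EuclideanSpace ℝ (Fin d))
    (hP : ∀ x, P x ∈ Xstar ∧ ∀ y ∈ Xstar, ‖x - P x‖ ≤ ‖x - y‖)
    -- `(α, β)`-regularity condition in the `ζ`-neighborhood of `X*`:
    (hreg : ∀ x, ‖x - P x‖ ≤ ζ →
      α / 2 * ‖x - P x‖ ^ 2 + 1 / (2 * β) * ‖gradient f x‖ ^ 2 ≤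
        (inner ℝ (gradient f x) (x - P x) : ℝ))
    (x : ℕ → EuclideanSpace ℝ (Fin d))
    (hstep : ∀ t, x (t + 1) = x t - (1 / β) • gradient f (x t))
    (hx0 : ‖x 0 - P (x 0)‖ ≤ ζ) :
    ∀ t : ℕ, ‖x t - P (x t)‖ ≤ ζ ∧
      ‖x (t + 1) - P (x (t + 1))‖ ^ 2 ≤ (1 - α / β) * ‖x t - P (x t)‖ ^ 2 := by
  have key : ∀ t, ‖x t - P (x t)‖ ≤ ζ →
      ‖x (t + 1) - P (x (t + 1))‖ ^ 2 ≤ (1 - α / β) * ‖x t - P (x t)‖ ^ 2 := by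
    intro t ht
    have hreg' := hreg (x t) ht
    set g := gradient f (x t) with hg
    set a := x t - P (x t) with ha
    have h1 : ‖x (t + 1) - P (x (t + 1))‖ ≤ ‖x (t + 1) - P (x t)‖ :=
      (hP (x (t + 1))).2 (P (x t)) (hP (x t)).1
    have h2 : x (t + 1) - P (x t) = a - (1 / β) • g := by
      rw [hstep t, ha]; abel
    have h3 : ‖a - (1 / β) • g‖ ^ 2 =
        ‖a‖ ^ 2 - 2 * ((1 / β) * (inner ℝ g a : ℝ)) + (1 / β) ^ 2 * ‖g‖ ^ 2 := by
      rw [norm_sub_sq_real, real_inner_smul_right, norm_smul, mul_pow,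
        real_inner_comm]
      simp [abs_of_pos (by positivity : (0:ℝ) < 1 / β)]
    have hsq : ‖x (t + 1) - P (x (t + 1))‖ ^ 2 ≤ ‖a - (1 / β) • g‖ ^ 2 := by
      rw [← h2]; exact pow_le_pow_left₀ (norm_nonneg _) h1 2
    calc ‖x (t + 1) - P (x (t + 1))‖ ^ 2 ≤ ‖a - (1 / β) • g‖ ^ 2 := hsq
      _ = ‖a‖ ^ 2 - 2 * ((1 / β) * (inner ℝ g a : ℝ)) + (1 / β) ^ 2 * ‖g‖ ^ 2 := h3
      _ ≤ ‖a‖ ^ 2 - 2 * ((1 / β) * (α / 2 * ‖a‖ ^ 2 + 1 / (2 * β) * ‖g‖ ^ 2))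
            + (1 / β) ^ 2 * ‖g‖ ^ 2 := by
          have : (1 / β) * (α / 2 * ‖a‖ ^ 2 + 1 / (2 * β) * ‖g‖ ^ 2) ≤
              (1 / β) * (inner ℝ g a : ℝ) := by
            apply mul_le_mul_of_nonneg_left hreg' (by positivity)
          linarith
      _ = (1 - α / β) * ‖a‖ ^ 2 := by field_simp; ring
  intro t
  induction t with
  | zero => exact ⟨hx0, key 0 hx0⟩
  | succ n ih =>
    have hfac : (1 - α / β) ≤ 1 := by
      have : 0 ≤ α / β := by positivity
      linarith
    have hnext : ‖x (n + 1) - P (x (n + 1))‖ ≤ ζ := by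
      have h1 : ‖x (n + 1) - P (x (n + 1))‖ ^ 2 ≤ ζ ^ 2 := by
        calc ‖x (n + 1) - P (x (n + 1))‖ ^ 2
            ≤ (1 - α / β) * ‖x n - P (x n)‖ ^ 2 := ih.2
          _ ≤ 1 * ‖x n - P (x n)‖ ^ 2 :=
              mul_le_mul_of_nonneg_right hfac (by positivity)
          _ = ‖x n - P (x n)‖ ^ 2 := one_mul _
          _ ≤ ζ ^ 2 := pow_le_pow_left₀ (norm_nonneg _) ih.1 2
      nlinarith [norm_nonneg (x (n + 1) - P (x (n + 1)))]
    exact ⟨hnext, key (n + 1) hnext⟩
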